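/- Let F : 𝒞 ⥤ 𝒟 be a functor with right adjoint G : 𝒟 ⥤ 𝒞, with unit η : 𝟭 𝒞 ⟶ F ⋙ G and counit ε : G ⋙ F ⟶ 𝟭 𝒟. Then F is naturally full if and only if there exists a natural transformation ν : F ⋙ G ⟶ 𝟭 𝒞 such that ν_C ≫ η_C = 𝟙 (G.obj (F.obj C)) for every object C of 𝒞. Moreover, if F is naturally full, then for every object C of 𝒞 the counit component ε_{F.obj C} : F.obj (G.obj (F.obj C)) ⟶ F.obj C is an isomorphism with inverse F.map η_C. -/

import Mathlib

open CategoryTheory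

/-- A functor `F : C ⥤ D` is *naturally full* if there is a family of maps
`𝒫 : (F.obj X ⟶ F.obj Y) → (X ⟶ Y)`, natural in `X` and `Y`, which is a section of
the action of `F` on morphisms. -/
def NaturallyFull {C D : Type*} [Category C] [Category D] (F : C ⥤ D) : Prop :=
  ∃ P : ∀ (X Y : C), (F.obj X ⟶ F.obj Y) → (X ⟶ Y),
    (∀ (X' X Y Y' : C) (f : X' ⟶ X) (g : F.obj X ⟶ F.obj Y) (h : Y ⟶ Y'),
      P X' Y' (F.map f ≫ g ≫ F.map h) = f ≫ P X Y g ≫ h) ∧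
    (∀ (X Y : C) (g : F.obj X ⟶ F.obj Y), F.map (P X Y g) = g)


theorem naturallyFull_left_adjoint_iff {C D : Type*} [Category C] [Category D]
    (F : C ⥤ D) (G : D ⥤ C) (adj : F ⊣ G) :
    (NaturallyFull F ↔ ∃ ν : F ⋙ G ⟶ 𝟭 C,
        ∀ X : C, ν.app X ≫ adj.unit.app X = 𝟙 (G.obj (F.obj X))) ∧
    (NaturallyFull F → ∀ X : C,
        adj.counit.app (F.obj X) ≫ F.map (adj.unit.app X) = 𝟙 (F.obj (G.obj (F.obj X))) ∧
        F.map (adj.unit.app X) ≫ adj.counit.app (F.obj X) = 𝟙 (F.obj X)) := by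
  have fwd : NaturallyFull F → ∃ ν : F ⋙ G ⟶ 𝟭 C,
      ∀ X : C, ν.app X ≫ adj.unit.app X = 𝟙 (G.obj (F.obj X)) := by
    rintro ⟨P, hnat, hsec⟩
    refine ⟨{ app := fun X => P _ _ (adj.counit.app (F.obj X)), naturality := ?_ }, ?_⟩
    · intro X Y f
      dsimp
      have h1 := hnat _ _ _ _ (G.map (F.map f)) (adj.counit.app (F.obj Y)) (𝟙 Y)
      have h2 := hnat _ _ _ _ (𝟙 (G.obj (F.obj X))) (adj.counit.app (F.obj X)) f
      simp only [F.map_id, Category.comp_id, Category.id_comp] at h1 h2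
      rw [← h1, ← h2]
      congr 1
      have := adj.counit.naturality (F.map f)
      simp only [Functor.comp_map, Functor.id_map] at this
      exact this
    · intro X
      dsimp
      have h := adj.unit.naturality (P _ _ (adj.counit.app (F.obj X)))
      dsimp at h
      rw [h, hsec, adj.right_triangle_components]
  have hFν : ∀ (ν : F ⋙ G ⟶ 𝟭 C),
      (∀ X : C, ν.app X ≫ adj.unit.app X = 𝟙 (G.obj (F.obj X))) →
      ∀ X : C, F.map (ν.app X) = adj.counit.app (F.obj X) := by
    intro ν hν X
    calc F.map (ν.app X)
        = F.map (ν.app X) ≫ F.map (adj.unit.app X) ≫ adj.counit.app (F.obj X) := by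
          erw [adj.left_triangle_components]; simp
      _ = F.map (ν.app X ≫ adj.unit.app X) ≫ adj.counit.app (F.obj X) := by
          rw [F.map_comp, Category.assoc]
      _ = adj.counit.app (F.obj X) := by rw [hν X]; simp
  refine ⟨⟨fwd, ?_⟩, ?_⟩
  · rintro ⟨ν, hν⟩
    refine ⟨fun X Y g => adj.unit.app X ≫ G.map g ≫ ν.app Y, ?_, ?_⟩
    · intro X' X Y Y' f g h
      have hu := adj.unit.naturality f
      dsimp at hu
      have hn := ν.naturality h
      dsimp at hn
      simp only [G.map_comp, Category.assoc]
      rw [hn, ← Category.assoc (adj.unit.app X'), ← hu]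
      simp
    · intro X Y g
      simp only [F.map_comp, hFν ν hν Y]
      have hc := adj.counit.naturality g
      dsimp at hc
      rw [hc]
      rw [← Category.assoc, adj.left_triangle_components, Category.id_comp]
  · intro hNF X
    obtain ⟨ν, hν⟩ := fwd hNF
    refine ⟨?_, adj.left_triangle_components X⟩
    rw [← hFν ν hν X, ← F.map_comp, hν X]
    simp
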